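/- Let f, g : ℂ → ℂ be nonconstant entire functions with min{|f(z)|, |g(z)|} ≤ 1 for all z ∈ ℂ. Then there exist nonconstant entire functions f₃, g₃ : ℂ → ℂ such that |f₃(0)| > 1, |g₃(0)| > 1, and min{|f₃(z)|, |g₃(z)|} ≤ 1/|z| < 1 for all z with |z| > 1; moreover, if f is of minimal exponential type then f₃ can be taken of minimal exponential type, and if g is of finite exponential type then g₃ can be taken of finite exponential type. -/

import Mathlib

/-- An entire function has finite exponential type if `|f z| ≤ C · exp (τ · |z|)`
for some constants `C, τ > 0`. -/
def FinExpType (f : ℂ → ℂ) : Prop :=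
  ∃ C τ : ℝ, 0 < C ∧ 0 < τ ∧ ∀ z : ℂ, ‖f z‖ ≤ C * Real.exp (τ * ‖z‖)

/-- An entire function has minimal exponential type if for every `ε > 0` there is
a constant `C` with `|f z| ≤ C · exp (ε · |z|)`. -/
def MinExpType (f : ℂ → ℂ) : Prop :=
  ∀ ε : ℝ, 0 < ε → ∃ C : ℝ, ∀ z : ℂ, ‖f z‖ ≤ C * Real.exp (ε * ‖z‖)

/-- A function is constant. -/
def IsConst (f : ℂ → ℂ) : Prop := ∃ c : ℂ, ∀ z : ℂ, f z = c

open Complex Set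

/-- The normalized function: `c · (f (L z + a) - f a) / z`, extended by its derivative at `0`. -/
noncomputable def nf (f : ℂ → ℂ) (a : ℂ) (L c : ℝ) : ℂ → ℂ :=
  fun z => (c : ℂ) * dslope (fun w => f ((L : ℂ) * w + a)) 0 z

lemma inner_diff (f : ℂ → ℂ) (hf : Differentiable ℂ f) (a : ℂ) (L : ℝ) :
    Differentiable ℂ (fun w : ℂ => f ((L : ℂ) * w + a)) :=
  hf.comp ((differentiable_id.const_mul ((L : ℂ))).add_const a)

lemma nf_diff (f : ℂ → ℂ) (hf : Differentiable ℂ f) (a : ℂ) (L c : ℝ) :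
    Differentiable ℂ (nf f a L c) := by
  have hF := inner_diff f hf a L
  have hd : Differentiable ℂ (dslope (fun w : ℂ => f ((L : ℂ) * w + a)) 0) := by
    intro z
    rcases eq_or_ne z 0 with rfl | hz
    · obtain ⟨p, hp⟩ := hF.analyticAt 0
      exact hp.has_fpower_series_dslope_fslope.analyticAt.differentiableAt
    · exact (differentiableAt_dslope_of_ne hz).mpr (hF _)
  exact hd.const_mul _

lemma nf_zero (f : ℂ → ℂ) (hf : Differentiable ℂ f) (a : ℂ) (L c : ℝ) :
    nf f a L c 0 = (c : ℂ) * ((L : ℂ) * deriv f a) := by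
  have h1 : HasDerivAt (fun w : ℂ => (L : ℂ) * w + a) (L : ℂ) 0 := by
    simpa using ((hasDerivAt_id (0 : ℂ)).const_mul ((L : ℂ))).add_const a
  have h0 : HasDerivAt f (deriv f a) ((fun w : ℂ => (L : ℂ) * w + a) 0) := by
    simpa using (hf a).hasDerivAt
  have h2 : HasDerivAt (fun w : ℂ => f ((L : ℂ) * w + a)) (deriv f a * (L : ℂ)) 0 :=
    HasDerivAt.comp 0 h0 h1
  rw [nf, dslope_same, h2.deriv]; ring

lemma nf_abs (f : ℂ → ℂ) (a : ℂ) (L c : ℝ) {z : ℂ} (hz : z ≠ 0) :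
    ‖nf f a L c z‖
      = |c| * ‖f ((L : ℂ) * z + a) - f a‖ / ‖z‖ := by
  have h := sub_smul_dslope (fun w : ℂ => f ((L : ℂ) * w + a)) 0 z
  simp only [sub_zero, smul_eq_mul, mul_zero, zero_add] at h
  have habs : ‖z‖ * ‖dslope (fun w : ℂ => f ((L : ℂ) * w + a)) 0 z‖
      = ‖f ((L : ℂ) * z + a) - f a‖ := by
    rw [← norm_mul, h]
  have hz' : ‖z‖ ≠ 0 := by simpa using hz
  rw [nf, norm_mul, Complex.norm_real, Real.norm_eq_abs, ← habs]
  field_simp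

lemma nf_growth (f : ℂ → ℂ) (hf : Differentiable ℂ f) (a : ℂ) (L c : ℝ) (hL : 0 < L)
    {C ε : ℝ} (hC : 0 ≤ C) (hε : 0 < ε)
    (hb : ∀ z : ℂ, ‖f z‖ ≤ C * Real.exp (ε * ‖z‖)) :
    ∃ C' : ℝ, 1 ≤ C' ∧
      ∀ z : ℂ, ‖nf f a L c z‖ ≤ C' * Real.exp ((ε * L) * ‖z‖) := by
  obtain ⟨M, hM⟩ := (isCompact_closedBall (0 : ℂ) 1).exists_bound_of_continuousOn
      ((nf_diff f hf a L c).continuous.continuousOn)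
  set K : ℝ := |c| * (C * Real.exp (ε * ‖a‖) + ‖f a‖) with hK
  have hK0 : 0 ≤ K := by positivity
  refine ⟨max 1 (max M K), le_max_left _ _, fun z => ?_⟩
  have hC'0 : (0 : ℝ) ≤ max 1 (max M K) := le_trans zero_le_one (le_max_left _ _)
  have hexp1 : 1 ≤ Real.exp ((ε * L) * ‖z‖) := by
    rw [Real.one_le_exp_iff]; positivity
  rcases le_or_gt (‖z‖) 1 with h1 | h1
  · have hmem : z ∈ Metric.closedBall (0 : ℂ) 1 := by
      simpa [Metric.mem_closedBall, Complex.dist_eq] using h1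
    have := hM z hmem
    calc ‖nf f a L c z‖ ≤ M := this
      _ ≤ max 1 (max M K) := le_trans (le_max_left _ _) (le_max_right _ _)
      _ ≤ max 1 (max M K) * Real.exp ((ε * L) * ‖z‖) := by
          nlinarith
  · have hz : z ≠ 0 := by
      intro h; rw [h] at h1; simp at h1; linarith
    rw [nf_abs f a L c hz]
    have htri : ‖f ((L : ℂ) * z + a) - f a‖
        ≤ ‖f ((L : ℂ) * z + a)‖ + ‖f a‖ := by
      simpa using norm_sub_le (f ((L : ℂ) * z + a)) (f a)
    have hw : ‖(L : ℂ) * z + a‖ ≤ L * ‖z‖ + ‖a‖ := by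
      calc ‖(L : ℂ) * z + a‖
          ≤ ‖(L : ℂ) * z‖ + ‖a‖ := by
            simpa using norm_add_le ((L : ℂ) * z) a
        _ = L * ‖z‖ + ‖a‖ := by
            rw [norm_mul, Complex.norm_real, Real.norm_eq_abs, abs_of_pos hL]
    have hfw : ‖f ((L : ℂ) * z + a)‖
        ≤ C * Real.exp (ε * (L * ‖z‖ + ‖a‖)) := by
      refine le_trans (hb _) ?_
      have := Real.exp_le_exp.mpr (mul_le_mul_of_nonneg_left hw hε.le)
      nlinarith [this, Real.exp_pos (ε * ‖(L : ℂ) * z + a‖)]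
    have hsplit : Real.exp (ε * (L * ‖z‖ + ‖a‖))
        = Real.exp ((ε * L) * ‖z‖) * Real.exp (ε * ‖a‖) := by
      rw [← Real.exp_add]; ring_nf
    set E := Real.exp ((ε * L) * ‖z‖) with hE
    set Ea := Real.exp (ε * ‖a‖) with hEa
    have hEa0 : 0 < Ea := Real.exp_pos _
    have hE1 : 1 ≤ E := hexp1
    have hnum : ‖f ((L : ℂ) * z + a) - f a‖
        ≤ C * Ea * E + ‖f a‖ := by
      rw [hsplit] at hfw; nlinarith [htri, hfw]
    have hfa0 : 0 ≤ ‖f a‖ := norm_nonneg _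
    have hstep : |c| * ‖f ((L : ℂ) * z + a) - f a‖ / ‖z‖
        ≤ |c| * ‖f ((L : ℂ) * z + a) - f a‖ := by
      apply div_le_self (by positivity) h1.le
    refine le_trans hstep ?_
    calc |c| * ‖f ((L : ℂ) * z + a) - f a‖
        ≤ |c| * (C * Ea * E + ‖f a‖) := by
          apply mul_le_mul_of_nonneg_left hnum (abs_nonneg c)
      _ ≤ K * E := by
          rw [hK]
          nlinarith [abs_nonneg c, mul_nonneg (abs_nonneg c) hfa0,
            mul_nonneg (mul_nonneg hC hEa0.le) (abs_nonneg c)]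
      _ ≤ max 1 (max M K) * E := by
          apply mul_le_mul_of_nonneg_right
            (le_trans (le_max_right _ _) (le_max_right _ _)) (by positivity)

lemma nf_nonconst (f g : ℂ → ℂ) (hg : Differentiable ℂ g)
    (hgc : ¬ IsConst g)
    (hmin : ∀ z : ℂ, min (‖f z‖) (‖g z‖) ≤ 1)
    (a : ℂ) (L c : ℝ) (hL : 0 < L) (hv : 1 < ‖nf f a L c 0‖) :
    ¬ IsConst (nf f a L c) := by
  rintro ⟨k, hk⟩
  have hk0 : ‖k‖ > 1 := by rw [← hk 0]; exact hv
  have hkne : k ≠ 0 := by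
    intro h; rw [h] at hk0; simp at hk0; linarith
  have hcne : (c : ℂ) ≠ 0 := by
    intro h
    have := hk 0
    rw [nf, h, zero_mul] at this
    rw [← this] at hkne; exact hkne rfl
  -- for every z : c * (F z - F 0) = z * k
  have key : ∀ z : ℂ, (c : ℂ) * (f ((L : ℂ) * z + a) - f a) = z * k := by
    intro z
    have h := sub_smul_dslope (fun w : ℂ => f ((L : ℂ) * w + a)) 0 z
    simp only [sub_zero, smul_eq_mul, mul_zero, zero_add] at h
    have h2 : (c : ℂ) * dslope (fun w : ℂ => f ((L : ℂ) * w + a)) 0 z = k := hk z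
    calc (c : ℂ) * (f ((L : ℂ) * z + a) - f a)
        = z * ((c : ℂ) * dslope (fun w : ℂ => f ((L : ℂ) * w + a)) 0 z) := by
          rw [← h]; ring
      _ = z * k := by rw [h2]
  -- |f w| > 1 for w far from a
  have hcabs : 0 < ‖(c : ℂ)‖ := by
    simpa [norm_pos_iff] using hcne
  set R : ℝ := (‖f a‖ + 2) * |c| / ‖k‖ with hR
  have hfar : ∀ w : ℂ, L * R < ‖w - a‖ → ‖g w‖ ≤ 1 := by
    intro w hw
    set z : ℂ := (w - a) / (L : ℂ) with hzdef
    have hLne : (L : ℂ) ≠ 0 := by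
      simp only [ne_eq, Complex.ofReal_eq_zero]; exact hL.ne'
    have hwz : (L : ℂ) * z + a = w := by rw [hzdef]; field_simp; ring
    have hzabs : ‖z‖ = ‖w - a‖ / L := by
      rw [hzdef, norm_div, Complex.norm_real, Real.norm_eq_abs, abs_of_pos hL]
    have hzR : R < ‖z‖ := by
      rw [hzabs, lt_div_iff₀ hL]
      linarith [hw]
    have hkey := key z
    rw [hwz] at hkey
    -- |c| * |f w - f a| = |z| * |k|
    have habs : ‖(c : ℂ)‖ * ‖f w - f a‖
        = ‖z‖ * ‖k‖ := by
      rw [← norm_mul, ← norm_mul, hkey]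
    rw [Complex.norm_real, Real.norm_eq_abs] at habs
    have hkpos : 0 < ‖k‖ := by linarith
    have hc' : 0 < |c| := by rwa [← Real.norm_eq_abs, ← Complex.norm_real]
    have hfw : 1 < ‖f w‖ := by
      have h1 : ‖f w - f a‖ = ‖z‖ * ‖k‖ / |c| := by
        field_simp [hc'.ne']
        linarith [habs, mul_comm (‖f w - f a‖) |c|]
      have h2 : ‖z‖ * ‖k‖ / |c|
          > (‖f a‖ + 2) := by
        rw [gt_iff_lt, lt_div_iff₀ hc']
        have : R * ‖k‖ = (‖f a‖ + 2) * |c| := by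
          rw [hR]; field_simp
        nlinarith [hzR, hkpos]
      have h3 : ‖f w - f a‖ ≤ ‖f w‖ + ‖f a‖ := by
        simpa using norm_sub_le (f w) (f a)
      linarith [h1 ▸ h3, h2]
    have := hmin w
    rcases min_le_iff.mp this with h | h
    · linarith
    · exact h
  -- g is bounded, hence constant
  obtain ⟨M, hM⟩ := (isCompact_closedBall a (L * R)).exists_bound_of_continuousOn
      hg.continuous.continuousOn
  have hbdd : Bornology.IsBounded (Set.range g) := by
    apply (Metric.isBounded_closedBall (x := (0 : ℂ)) (r := max M 1)).subset
    rintro _ ⟨w, rfl⟩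
    rw [Metric.mem_closedBall, dist_zero_right]
    rcases le_or_gt (‖w - a‖) (L * R) with h | h
    · have hmem : w ∈ Metric.closedBall a (L * R) := by
        simpa [Metric.mem_closedBall, Complex.dist_eq] using h
      exact le_trans (hM w hmem) (le_max_left _ _)
    · have := hfar w h
      exact le_trans this (le_max_right _ _)
  apply hgc
  exact ⟨g 0, fun z => hg.apply_eq_apply_of_bounded hbdd z 0⟩

lemma exists_good_point (f g : ℂ → ℂ) (hf : Differentiable ℂ f) (hg : Differentiable ℂ g)
    (hfc : ¬ IsConst f) (hgc : ¬ IsConst g) :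
    ∃ a : ℂ, deriv f a ≠ 0 ∧ deriv g a ≠ 0 := by
  by_contra h
  push_neg at h
  by_cases hall : ∀ x : ℂ, deriv f x = 0
  · exact hfc ⟨f 0, fun z => is_const_of_deriv_eq_zero hf hall z 0⟩
  · push_neg at hall
    obtain ⟨p, hp⟩ := hall
    have hdf : AnalyticOnNhd ℂ (deriv f) univ :=
      (hf.differentiableOn.analyticOnNhd isOpen_univ).deriv
    have hdg : AnalyticOnNhd ℂ (deriv g) univ :=
      (hg.differentiableOn.analyticOnNhd isOpen_univ).deriv
    have hcont : ContinuousAt (deriv f) p :=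
      (hdf p (mem_univ p)).continuousAt
    have hev : ∀ᶠ z in nhds p, deriv f z ≠ 0 := hcont.eventually_ne hp
    have hev0 : deriv g =ᶠ[nhds p] 0 := hev.mono fun x hx => h x hx
    have := hdg.eqOn_zero_of_preconnected_of_eventuallyEq_zero
      isPreconnected_univ (mem_univ p) hev0
    apply hgc
    refine ⟨g 0, fun z => is_const_of_deriv_eq_zero hg (fun x => ?_) z 0⟩
    exact this (mem_univ x)

theorem normalization (f g : ℂ → ℂ)
    (hf : Differentiable ℂ f) (hg : Differentiable ℂ g)
    (hfc : ¬ IsConst f) (hgc : ¬ IsConst g)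
    (hmin : ∀ z : ℂ, min (‖f z‖) (‖g z‖) ≤ 1) :
    ∃ f₃ g₃ : ℂ → ℂ,
      Differentiable ℂ f₃ ∧ Differentiable ℂ g₃ ∧
      ¬ IsConst f₃ ∧ ¬ IsConst g₃ ∧
      1 < ‖f₃ 0‖ ∧ 1 < ‖g₃ 0‖ ∧
      (∀ z : ℂ, 1 < ‖z‖ →
        min (‖f₃ z‖) (‖g₃ z‖) ≤ 1 / ‖z‖ ∧
        1 / ‖z‖ < 1) ∧
      (MinExpType f → MinExpType f₃) ∧
      (FinExpType g → FinExpType g₃) := by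
  obtain ⟨a, hfa, hga⟩ := exists_good_point f g hf hg hfc hgc
  set cf : ℝ := (1 + ‖f a‖)⁻¹ with hcf
  set cg : ℝ := (1 + ‖g a‖)⁻¹ with hcg
  have hfa0 : 0 ≤ ‖f a‖ := norm_nonneg _
  have hga0 : 0 ≤ ‖g a‖ := norm_nonneg _
  have hcf0 : 0 < cf := by rw [hcf]; positivity
  have hcg0 : 0 < cg := by rw [hcg]; positivity
  have hdfa : 0 < ‖deriv f a‖ := by
    simpa [norm_pos_iff] using hfa
  have hdga : 0 < ‖deriv g a‖ := by
    simpa [norm_pos_iff] using hga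
  set L : ℝ := max (2 / (cf * ‖deriv f a‖)) (2 / (cg * ‖deriv g a‖))
    with hLdef
  have hL : 0 < L := lt_of_lt_of_le (by positivity) (le_max_left _ _)
  have hLf : 1 < cf * (L * ‖deriv f a‖) := by
    have h1 : 2 / (cf * ‖deriv f a‖) ≤ L := le_max_left _ _
    rw [div_le_iff₀ (by positivity)] at h1
    nlinarith
  have hLg : 1 < cg * (L * ‖deriv g a‖) := by
    have h1 : 2 / (cg * ‖deriv g a‖) ≤ L := le_max_right _ _
    rw [div_le_iff₀ (by positivity)] at h1
    nlinarith
  have hval_f : 1 < ‖nf f a L cf 0‖ := by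
    rw [nf_zero f hf a L cf, norm_mul, norm_mul, Complex.norm_real, Real.norm_eq_abs, Complex.norm_real, Real.norm_eq_abs,
      abs_of_pos hcf0, abs_of_pos hL]
    exact hLf
  have hval_g : 1 < ‖nf g a L cg 0‖ := by
    rw [nf_zero g hg a L cg, norm_mul, norm_mul, Complex.norm_real, Real.norm_eq_abs, Complex.norm_real, Real.norm_eq_abs,
      abs_of_pos hcg0, abs_of_pos hL]
    exact hLg
  have hmin' : ∀ z : ℂ, min (‖g z‖) (‖f z‖) ≤ 1 := by
    intro z; rw [min_comm]; exact hmin z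
  refine ⟨nf f a L cf, nf g a L cg, nf_diff f hf a L cf, nf_diff g hg a L cg,
    nf_nonconst f g hg hgc hmin a L cf hL hval_f,
    nf_nonconst g f hf hfc hmin' a L cg hL hval_g,
    hval_f, hval_g, ?_, ?_, ?_⟩
  · -- min bound
    intro z hz
    have hzpos : 0 < ‖z‖ := by linarith
    have hzne : z ≠ 0 := by
      intro h; rw [h] at hz; simp at hz; linarith
    refine ⟨?_, (div_lt_one hzpos).mpr hz⟩
    rcases min_le_iff.mp (hmin ((L : ℂ) * z + a)) with h | h
    · apply min_le_of_left_le
      rw [nf_abs f a L cf hzne]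
      have htri : ‖f ((L : ℂ) * z + a) - f a‖
          ≤ 1 + ‖f a‖ := by
        have := norm_sub_le (f ((L : ℂ) * z + a)) (f a)
        linarith
      have hnum : |cf| * ‖f ((L : ℂ) * z + a) - f a‖ ≤ 1 := by
        rw [abs_of_pos hcf0, hcf]
        rw [inv_mul_le_iff₀ (by positivity)]
        simpa using htri
      exact (div_le_div_iff_of_pos_right hzpos).mpr hnum
    · apply min_le_of_right_le
      rw [nf_abs g a L cg hzne]
      have htri : ‖g ((L : ℂ) * z + a) - g a‖
          ≤ 1 + ‖g a‖ := by
        have := norm_sub_le (g ((L : ℂ) * z + a)) (g a)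
        linarith
      have hnum : |cg| * ‖g ((L : ℂ) * z + a) - g a‖ ≤ 1 := by
        rw [abs_of_pos hcg0, hcg]
        rw [inv_mul_le_iff₀ (by positivity)]
        simpa using htri
      exact (div_le_div_iff_of_pos_right hzpos).mpr hnum
  · -- MinExpType
    intro hM ε hε
    obtain ⟨C, hC⟩ := hM (ε / L) (by positivity)
    have hC0 : 0 ≤ C := by
      have := hC 0
      simp only [norm_zero, mul_zero, Real.exp_zero, mul_one] at this
      exact le_trans (norm_nonneg _) this
    obtain ⟨C', _, hC'⟩ := nf_growth f hf a L cf hL hC0 (by positivity) hC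
    refine ⟨C', fun z => ?_⟩
    have := hC' z
    rwa [div_mul_cancel₀ _ hL.ne'] at this
  · -- FinExpType
    rintro ⟨C, τ, hCpos, hτpos, hb⟩
    obtain ⟨C', h1C', hC'⟩ := nf_growth g hg a L cg hL hCpos.le hτpos hb
    exact ⟨C', τ * L, lt_of_lt_of_le one_pos h1C', mul_pos hτpos hL, hC'⟩
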